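/- arXiv:1609.01312 — 4 statements merged into one kernel-verified Lean document; each statement's English description precedes it below -/
import Mathlib

section
/- Let $p, q$ be natural numbers, let $E = \mathbb{R}^p$ and $F = \mathbb{R}^q$, and let $f : E \times F \to \mathbb{R}$ be twice continuously differentiable. Define $g : E \times F \to (E \to_L \mathbb{R})$ by $g(h,v) = D_h f(h,v)$, and suppose $a$ satisfies $g(a) = 0$ with the horizontal Hessian $H_a$ (the Fréchet derivative at the first coordinate of $a$ of $h' \mapsto g(h', v_0)$) bijective. Then the kernel of the Fréchet derivative $Dg(a) : E \times F \to (E \to_L \mathbb{R})$ intersects the horizontal subspace $E \times \{0\}$ trivially: if $X = (X_h, 0)$ and $Dg(a)(X) = 0$, then $X_h = 0$. -/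
/-- Transversality assertion of Lemma 1: at a tangential Morse singularity, the
kernel of the derivative of the tangential differential meets the horizontal
subspace `E × {0}` trivially. -/
theorem kernel_meets_horizontal_trivially_at_morse_singularity {p q : ℕ}
    (f : EuclideanSpace ℝ (Fin p) × EuclideanSpace ℝ (Fin q) → ℝ)
    (hf : ContDiff ℝ 2 f)
    (g : EuclideanSpace ℝ (Fin p) × EuclideanSpace ℝ (Fin q) →
      (EuclideanSpace ℝ (Fin p) →L[ℝ] ℝ))
    (hg : ∀ x, g x = fderiv ℝ (fun h' => f (h', x.2)) x.1)
    (a : EuclideanSpace ℝ (Fin p) × EuclideanSpace ℝ (Fin q))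
    (ha : g a = 0)
    (H : EuclideanSpace ℝ (Fin p) →L[ℝ] (EuclideanSpace ℝ (Fin p) →L[ℝ] ℝ))
    (hH : H = fderiv ℝ (fun h' => g (h', a.2)) a.1)
    (hbij : Function.Bijective H) :
    ∀ Xh : EuclideanSpace ℝ (Fin p), fderiv ℝ g a (Xh, 0) = 0 → Xh = 0 := by
  intro Xh hXh
  have hfd : Differentiable ℝ f := hf.differentiable (by norm_num)
  have hg' : g = fun x => (fderiv ℝ f x).comp
      (ContinuousLinearMap.inl ℝ (EuclideanSpace ℝ (Fin p)) (EuclideanSpace ℝ (Fin q))) := by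
    funext x
    rw [hg]
    have h1 : HasFDerivAt (fun h' => f (h', x.2))
        ((fderiv ℝ f x).comp
          (ContinuousLinearMap.inl ℝ (EuclideanSpace ℝ (Fin p)) (EuclideanSpace ℝ (Fin q))))
        x.1 := (hfd x).hasFDerivAt.comp x.1 (hasFDerivAt_prodMk_left x.1 x.2)
    exact h1.fderiv
  have hgC : ContDiff ℝ 1 g := by
    rw [hg']
    exact (hf.fderiv_right (by norm_num)).clm_comp contDiff_const
  have hga : DifferentiableAt ℝ g a := (hgC.differentiable one_ne_zero) a
  have h2 : HasFDerivAt (fun h' => g (h', a.2))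
      ((fderiv ℝ g a).comp
        (ContinuousLinearMap.inl ℝ (EuclideanSpace ℝ (Fin p)) (EuclideanSpace ℝ (Fin q))))
      a.1 := hga.hasFDerivAt.comp a.1 (hasFDerivAt_prodMk_left a.1 a.2)
  have hHX : H Xh = fderiv ℝ g a (Xh, 0) := by
    rw [hH, h2.fderiv]; rfl
  apply hbij.injective
  rw [map_zero, hHX, hXh]
end

section
/- Let $H_0, H_1, H_2$ be complex Hilbert spaces and let $d_1 : H_0 \to H_1$ and $d_2 : H_1 \to H_2$ be bounded linear operators with $d_2 \circ d_1 = 0$. Set $\Delta = d_1 \circ d_1^* + d_2^* \circ d_2$. Then $H_1$ decomposes as the internal orthogonal direct sum $H_1 = \ker \Delta \oplus \overline{\mathrm{Im}\, d_1} \oplus \overline{\mathrm{Im}\, d_2^*}$: the three closed subspaces are pairwise orthogonal and their sum is all of $H_1$. -/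
open ContinuousLinearMap

section aux

variable {E F : Type*}
  [NormedAddCommGroup E] [InnerProductSpace ℂ E] [CompleteSpace E]
  [NormedAddCommGroup F] [InnerProductSpace ℂ F] [CompleteSpace F]

/-- Vectors in the orthogonal complement are orthogonal to the closure. -/
lemma aux_orth_closure {K : Submodule ℂ E} {x y : E} (hx : x ∈ Kᗮ)
    (hy : y ∈ K.topologicalClosure) : (inner ℂ x y : ℂ) = 0 := by
  have h : K.topologicalClosure ≤ Kᗮᗮ :=
    K.topologicalClosure_minimal K.le_orthogonal_orthogonal Kᗮ.isClosed_orthogonal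
  exact (Submodule.mem_orthogonal _ y).1 (h hy) x hx

lemma aux_orth_range_adjoint_ker {A : E →L[ℂ] F} {u : E}
    (hu : u ∈ (LinearMap.range (adjoint A : F →ₗ[ℂ] E))ᗮ) : A u = 0 := by
  rw [← inner_self_eq_zero (𝕜 := ℂ)]
  have := hu (adjoint A (A u)) ⟨A u, rfl⟩
  rwa [adjoint_inner_left] at this

end aux

set_option maxHeartbeats 2000000 in
/-- Full Hodge decomposition of the middle space of a bounded Hilbert complex
`d₂ ∘ d₁ = 0`: `H₁ = ker Δ ⊕ cl.Im d₁ ⊕ cl.Im d₂*`, with the three closed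
subspaces pairwise orthogonal and summing to all of `H₁`. -/
theorem full_hodge_decomposition {H0 H1 H2 : Type*}
    [NormedAddCommGroup H0] [InnerProductSpace ℂ H0] [CompleteSpace H0]
    [NormedAddCommGroup H1] [InnerProductSpace ℂ H1] [CompleteSpace H1]
    [NormedAddCommGroup H2] [InnerProductSpace ℂ H2] [CompleteSpace H2]
    (d1 : H0 →L[ℂ] H1) (d2 : H1 →L[ℂ] H2) (hdd : d2.comp d1 = 0) :
    (∀ x ∈ LinearMap.ker ((d1.comp (adjoint d1) + (adjoint d2).comp d2 : H1 →L[ℂ] H1) : H1 →ₗ[ℂ] H1),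
      ∀ y ∈ (LinearMap.range (d1 : H0 →ₗ[ℂ] H1)).topologicalClosure, (inner ℂ x y : ℂ) = 0) ∧
    (∀ x ∈ LinearMap.ker ((d1.comp (adjoint d1) + (adjoint d2).comp d2 : H1 →L[ℂ] H1) : H1 →ₗ[ℂ] H1),
      ∀ z ∈ (LinearMap.range (adjoint d2 : H2 →ₗ[ℂ] H1)).topologicalClosure,
        (inner ℂ x z : ℂ) = 0) ∧
    (∀ y ∈ (LinearMap.range (d1 : H0 →ₗ[ℂ] H1)).topologicalClosure,
      ∀ z ∈ (LinearMap.range (adjoint d2 : H2 →ₗ[ℂ] H1)).topologicalClosure,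
        (inner ℂ y z : ℂ) = 0) ∧
    LinearMap.ker ((d1.comp (adjoint d1) + (adjoint d2).comp d2 : H1 →L[ℂ] H1) : H1 →ₗ[ℂ] H1) ⊔
        (LinearMap.range (d1 : H0 →ₗ[ℂ] H1)).topologicalClosure ⊔
        (LinearMap.range (adjoint d2 : H2 →ₗ[ℂ] H1)).topologicalClosure = ⊤ := by
  set Δ : H1 →L[ℂ] H1 := d1.comp (adjoint d1) + (adjoint d2).comp d2 with hΔ
  set M : Submodule ℂ H1 := LinearMap.ker (Δ : H1 →ₗ[ℂ] H1) with hM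
  set K : Submodule ℂ H1 := (LinearMap.range (d1 : H0 →ₗ[ℂ] H1)).topologicalClosure with hK
  set L : Submodule ℂ H1 := (LinearMap.range (adjoint d2 : H2 →ₗ[ℂ] H1)).topologicalClosure with hL
  -- Kernel characterization: Δ x = 0 ↔ d1† x = 0 ∧ d2 x = 0
  have hker : ∀ x, x ∈ M ↔ adjoint d1 x = 0 ∧ d2 x = 0 := by
    intro x
    constructor
    · intro hx
      have hx0 : d1 (adjoint d1 x) + adjoint d2 (d2 x) = 0 := hx
      have h1 : (inner ℂ (d1 (adjoint d1 x) + adjoint d2 (d2 x)) x : ℂ) = 0 := by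
        rw [hx0, inner_zero_left]
      rw [inner_add_left] at h1
      have h2 : (inner ℂ (d1 (adjoint d1 x)) x : ℂ) = inner ℂ (adjoint d1 x) (adjoint d1 x) := by
        rw [adjoint_inner_right]
      have h3 : (inner ℂ (adjoint d2 (d2 x)) x : ℂ) = inner ℂ (d2 x) (d2 x) := by
        rw [adjoint_inner_left]
      rw [h2, h3, inner_self_eq_norm_sq_to_K, inner_self_eq_norm_sq_to_K] at h1
      have h4 : (‖adjoint d1 x‖ : ℝ) ^ 2 + (‖d2 x‖ : ℝ) ^ 2 = 0 := by
        have h5 := congrArg Complex.re h1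
        simpa [← Complex.ofReal_pow, ← Complex.ofReal_add] using h5
      have ha := sq_nonneg ‖adjoint d1 x‖
      have hb := sq_nonneg ‖d2 x‖
      have hA2 : ‖adjoint d1 x‖ ^ 2 = 0 := by linarith
      have hB2 : ‖d2 x‖ ^ 2 = 0 := by linarith
      exact ⟨norm_eq_zero.mp (pow_eq_zero_iff two_ne_zero |>.mp hA2),
        norm_eq_zero.mp (pow_eq_zero_iff two_ne_zero |>.mp hB2)⟩
    · intro ⟨h1, h2⟩
      show d1 (adjoint d1 x) + adjoint d2 (d2 x) = 0
      rw [h1, h2, map_zero, map_zero, add_zero]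
  -- M ⊥ range d1
  have hMK : M ≤ (LinearMap.range (d1 : H0 →ₗ[ℂ] H1))ᗮ := by
    intro x hx
    rw [Submodule.mem_orthogonal]
    rintro _ ⟨a, rfl⟩
    rw [ContinuousLinearMap.coe_coe, ← adjoint_inner_right, ((hker x).1 hx).1, inner_zero_right]
  -- M ⊥ range d2†
  have hML : M ≤ (LinearMap.range (adjoint d2 : H2 →ₗ[ℂ] H1))ᗮ := by
    intro x hx
    rw [Submodule.mem_orthogonal]
    rintro _ ⟨b, rfl⟩
    rw [ContinuousLinearMap.coe_coe, adjoint_inner_left, ((hker x).1 hx).2, inner_zero_right]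
  -- range d1 ⊥ range d2†  (as: range d1 ≤ (range d2†)ᗮ)
  have hKL : LinearMap.range (d1 : H0 →ₗ[ℂ] H1) ≤ (LinearMap.range (adjoint d2 : H2 →ₗ[ℂ] H1))ᗮ := by
    rintro _ ⟨a, rfl⟩
    rw [Submodule.mem_orthogonal]
    rintro _ ⟨b, rfl⟩
    rw [ContinuousLinearMap.coe_coe, ContinuousLinearMap.coe_coe, adjoint_inner_left]
    have : d2 (d1 a) = (d2.comp d1) a := rfl
    rw [this, hdd]
    simp
  have hMclosed : IsClosed (M : Set H1) := ContinuousLinearMap.isClosed_ker Δ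
  refine ⟨?_, ?_, ?_, ?_⟩
  · intro x hx y hy
    rw [inner_eq_zero_symm]
    exact inner_eq_zero_symm.mp (aux_orth_closure (hMK hx) hy)
  · intro x hx z hz
    exact aux_orth_closure (hML hx) hz
  · intro y hy z hz
    have hKsub : K ≤ (LinearMap.range (adjoint d2 : H2 →ₗ[ℂ] H1))ᗮ :=
      (LinearMap.range (d1 : H0 →ₗ[ℂ] H1)).topologicalClosure_minimal hKL
        (LinearMap.range (adjoint d2 : H2 →ₗ[ℂ] H1)).isClosed_orthogonal
    exact aux_orth_closure (hKsub hy) hz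
  · -- sup = ⊤
    haveI : CompleteSpace M := hMclosed.completeSpace_coe
    haveI : CompleteSpace K :=
      (LinearMap.range (d1 : H0 →ₗ[ℂ] H1)).isClosed_topologicalClosure.completeSpace_coe
    haveI : CompleteSpace L :=
      (LinearMap.range (adjoint d2 : H2 →ₗ[ℂ] H1)).isClosed_topologicalClosure.completeSpace_coe
    -- K ≤ Mᗮ and L ≤ Mᗮ
    have hrange1 : LinearMap.range (d1 : H0 →ₗ[ℂ] H1) ≤ Mᗮ := by
      rintro _ ⟨a, rfl⟩
      rw [Submodule.mem_orthogonal]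
      intro u hu
      rw [ContinuousLinearMap.coe_coe, ← adjoint_inner_left, ((hker u).1 hu).1, inner_zero_left]
    have hrange2 : LinearMap.range (adjoint d2 : H2 →ₗ[ℂ] H1) ≤ Mᗮ := by
      rintro _ ⟨b, rfl⟩
      rw [Submodule.mem_orthogonal]
      intro u hu
      rw [ContinuousLinearMap.coe_coe, adjoint_inner_right, ((hker u).1 hu).2, inner_zero_left]
    have hKM : K ≤ Mᗮ :=
      (LinearMap.range (d1 : H0 →ₗ[ℂ] H1)).topologicalClosure_minimal hrange1 M.isClosed_orthogonal
    have hLM : L ≤ Mᗮ :=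
      (LinearMap.range (adjoint d2 : H2 →ₗ[ℂ] H1)).topologicalClosure_minimal hrange2
        M.isClosed_orthogonal
    -- L ≤ ker d1†
    have hrange2ker : LinearMap.range (adjoint d2 : H2 →ₗ[ℂ] H1) ≤ LinearMap.ker (adjoint d1 : H1 →ₗ[ℂ] H0) := by
      rintro _ ⟨b, rfl⟩
      have h0 : adjoint (d2.comp d1) = (adjoint d1).comp (adjoint d2) :=
        adjoint_comp d2 d1
      rw [hdd] at h0
      simp only [map_zero] at h0
      replace h0 := h0.symm
      have h1 := ContinuousLinearMap.ext_iff.mp h0 b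
      simpa using h1
    have hLker : L ≤ LinearMap.ker (adjoint d1 : H1 →ₗ[ℂ] H0) :=
      (LinearMap.range (adjoint d2 : H2 →ₗ[ℂ] H1)).topologicalClosure_minimal hrange2ker
        (ContinuousLinearMap.isClosed_ker (adjoint d1))
    -- Mᗮ ≤ K ⊔ L
    have hMperp : Mᗮ ≤ K ⊔ L := by
      intro x hx
      set k : H1 := (K.orthogonalProjectionOnto x : H1) with hk
      have hkK : k ∈ K := (K.orthogonalProjectionOnto x).2
      set r : H1 := x - k with hr
      have hrK : r ∈ Kᗮ := Submodule.sub_starProjection_mem_orthogonal (K := K) x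
      set l : H1 := (L.orthogonalProjectionOnto r : H1) with hl
      have hlL : l ∈ L := (L.orthogonalProjectionOnto r).2
      set s : H1 := r - l with hs
      have hsL : s ∈ Lᗮ := Submodule.sub_starProjection_mem_orthogonal (K := L) r
      -- s ∈ ker d2
      have hsd2 : d2 s = 0 := by
        have : s ∈ (LinearMap.range (adjoint d2 : H2 →ₗ[ℂ] H1))ᗮ :=
          Submodule.orthogonal_le (LinearMap.range (adjoint d2 : H2 →ₗ[ℂ] H1)).le_topologicalClosure hsL
        exact aux_orth_range_adjoint_ker this
      -- r ∈ ker d1†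
      have hrd1 : adjoint d1 r = 0 := by
        have hr' : r ∈ (LinearMap.range (d1 : H0 →ₗ[ℂ] H1))ᗮ :=
          Submodule.orthogonal_le (LinearMap.range (d1 : H0 →ₗ[ℂ] H1)).le_topologicalClosure hrK
        rw [← inner_self_eq_zero (𝕜 := ℂ)]
        have h6 := hr' (d1 (adjoint d1 r)) ⟨adjoint d1 r, rfl⟩
        rw [adjoint_inner_right]
        exact h6
      have hsd1 : adjoint d1 s = 0 := by
        have hl1 : adjoint d1 l = 0 := hLker hlL
        rw [hs, map_sub, hrd1, hl1, sub_zero]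
      have hsM : s ∈ M := (hker s).2 ⟨hsd1, hsd2⟩
      have hsMp : s ∈ Mᗮ := by
        have hkMp : k ∈ Mᗮ := hKM hkK
        have hlMp : l ∈ Mᗮ := hLM hlL
        have : s = x - k - l := by rw [hs, hr]
        rw [this]
        exact Submodule.sub_mem _ (Submodule.sub_mem _ hx hkMp) hlMp
      have hs0 : s = 0 := by
        have : s ∈ M ⊓ Mᗮ := ⟨hsM, hsMp⟩
        rwa [M.inf_orthogonal_eq_bot, Submodule.mem_bot] at this
      have hxkl : x = k + l := by
        have : s = x - k - l := by rw [hs, hr]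
        rw [hs0] at this
        linear_combination (norm := abel) -this
      rw [hxkl]
      exact Submodule.add_mem _ (Submodule.mem_sup_left hkK) (Submodule.mem_sup_right hlL)
    rw [eq_top_iff, ← Submodule.sup_orthogonal_of_hasOrthogonalProjection (K := M), sup_assoc]
    exact sup_le_sup_left hMperp M
end

section
/- Let $H$ be a complex Hilbert space, let $K, K', I, I'$ be closed subspaces of $H$ with $I \subseteq K$ and $I' \subseteq K'$, and let $T : H \to H$ be a continuous linear equivalence (bounded invertible operator) such that $T(K) = K'$ and $T(I) = I'$. Set $A = K \cap I^{\perp}$ and $A' = K' \cap I'^{\perp}$. Then the map $U : A \to A'$ sending $x$ to the orthogonal projection onto $A'$ of $T x$ is a continuous linear equivalence (a bounded bijection with bounded inverse). -/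
/-- Operator-theoretic lemma of Proposition 1: if a bounded invertible operator `T`
carries closed subspaces `K, I` (with `I ⊆ K`) onto `K', I'` (with `I' ⊆ K'`), then
the compression `U : K ∩ I^⊥ → K' ∩ I'^⊥` of `T`, sending `x` to the orthogonal
projection of `T x` onto `K' ∩ I'^⊥` (characterized by `U x ∈ K' ∩ I'^⊥` and
`T x - U x ⊥ K' ∩ I'^⊥`), is a continuous linear equivalence. -/
theorem compression_to_orthocomplements_is_equiv {H : Type*}
    [NormedAddCommGroup H] [InnerProductSpace ℂ H] [CompleteSpace H]
    (K K' I I' : Submodule ℂ H)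
    (hK : IsClosed (K : Set H)) (hK' : IsClosed (K' : Set H))
    (hI : IsClosed (I : Set H)) (hI' : IsClosed (I' : Set H))
    (hIK : I ≤ K) (hI'K' : I' ≤ K')
    (T : H ≃L[ℂ] H)
    (hTK : (T : H → H) '' (K : Set H) = (K' : Set H))
    (hTI : (T : H → H) '' (I : Set H) = (I' : Set H)) :
    ∃ U : (K ⊓ Iᗮ : Submodule ℂ H) ≃L[ℂ] (K' ⊓ I'ᗮ : Submodule ℂ H),
      ∀ x : (K ⊓ Iᗮ : Submodule ℂ H),
        T (x : H) - (U x : H) ∈ (K' ⊓ I'ᗮ : Submodule ℂ H)ᗮ := by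
  set A : Submodule ℂ H := K ⊓ Iᗮ with hAdef
  set A' : Submodule ℂ H := K' ⊓ I'ᗮ with hA'def
  have hAc : IsClosed (A : Set H) := by
    exact hK.inter I.isClosed_orthogonal
  have hA'c : IsClosed (A' : Set H) := by
    exact hK'.inter I'.isClosed_orthogonal
  haveI : CompleteSpace A := hAc.completeSpace_coe
  haveI : CompleteSpace A' := hA'c.completeSpace_coe
  haveI : CompleteSpace I := hI.completeSpace_coe
  haveI : CompleteSpace I' := hI'.completeSpace_coe
  -- T maps K into K', I into I', and T⁻¹ maps K' into K, I' into I
  have hTKmem : ∀ x ∈ K, T x ∈ K' := by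
    intro x hx
    have h : T x ∈ (T : H → H) '' (K : Set H) := ⟨x, hx, rfl⟩
    rw [hTK] at h
    exact h
  have hTImem : ∀ x ∈ I, T x ∈ I' := by
    intro x hx
    have h : T x ∈ (T : H → H) '' (I : Set H) := ⟨x, hx, rfl⟩
    rw [hTI] at h
    exact h
  have hTinvI : ∀ y ∈ I', T.symm y ∈ I := by
    intro y hy
    have h : y ∈ (T : H → H) '' (I : Set H) := by rw [hTI]; exact hy
    obtain ⟨x, hx, rfl⟩ := h
    simpa using hx
  have hTinvK : ∀ y ∈ K', T.symm y ∈ K := by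
    intro y hy
    have h : y ∈ (T : H → H) '' (K : Set H) := by rw [hTK]; exact hy
    obtain ⟨x, hx, rfl⟩ := h
    simpa using hx
  -- I' ⊆ A'ᗮ
  have hI'A' : ∀ z ∈ I', z ∈ A'ᗮ := by
    intro z hz
    intro u hu
    exact (Submodule.mem_orthogonal' _ _).1 hu.2 z hz
  -- decomposition: for y ∈ K', y - P_{A'} y ∈ I'
  have hdecomp : ∀ y ∈ K', y - (Submodule.orthogonalProjection A' y : H) ∈ I' := by
    intro y hy
    have hp : (Submodule.orthogonalProjection A' y : H) = y - (Submodule.orthogonalProjection I' y : H) := by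
      apply Submodule.eq_starProjection_of_mem_orthogonal
      · exact ⟨K'.sub_mem hy (hI'K' (Submodule.orthogonalProjection I' y).2),
          Submodule.sub_starProjection_mem_orthogonal y⟩
      · have : y - (y - (Submodule.orthogonalProjection I' y : H)) = (Submodule.orthogonalProjection I' y : H) := by
          abel
        rw [this]
        exact hI'A' _ (Submodule.orthogonalProjection I' y).2
    rw [hp]
    have : y - (y - (Submodule.orthogonalProjection I' y : H)) = (Submodule.orthogonalProjection I' y : H) := by abel
    rw [this]
    exact (Submodule.orthogonalProjection I' y).2
  -- the compression as a continuous linear map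
  set f : A →L[ℂ] A' :=
    (Submodule.orthogonalProjection A').comp ((T : H →L[ℂ] H).comp A.subtypeL) with hfdef
  have hfapply : ∀ x : A, f x = Submodule.orthogonalProjection A' (T (x : H)) := fun x => rfl
  -- injectivity
  have hker : f.ker = ⊥ := by
    rw [LinearMap.ker_eq_bot']
    intro x hx
    have hx0 : (Submodule.orthogonalProjection A' (T (x : H)) : H) = 0 := by
      rw [← hfapply]; rw [show f x = 0 from hx]; rfl
    have hTx : T (x : H) ∈ I' := by
      have := hdecomp (T (x : H)) (hTKmem _ x.2.1)
      rwa [hx0, sub_zero] at this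
    have hxI : (x : H) ∈ I := by
      have := hTinvI _ hTx
      simpa using this
    have hxperp : (x : H) ∈ Iᗮ := x.2.2
    have : (x : H) = 0 := by
      have := hxperp (x : H) hxI
      exact inner_self_eq_zero.mp this
    exact Subtype.ext this
  -- surjectivity
  have hrange : f.range = ⊤ := by
    rw [LinearMap.range_eq_top]
    intro y
    set w : H := T.symm (y : H) with hwdef
    have hwK : w ∈ K := hTinvK _ y.2.1
    set a : H := w - (Submodule.orthogonalProjection I w : H) with hadef
    have haA : a ∈ A := by
      constructor
      · exact K.sub_mem hwK (hIK (Submodule.orthogonalProjection I w).2)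
      · exact Submodule.sub_starProjection_mem_orthogonal w
    refine ⟨⟨a, haA⟩, ?_⟩
    apply Subtype.ext
    rw [ContinuousLinearMap.coe_coe, hfapply]
    have hTa : T a = (y : H) - T (Submodule.orthogonalProjection I w : H) := by
      simp [hadef, map_sub, hwdef]
    rw [hTa]
    have hTi : T (Submodule.orthogonalProjection I w : H) ∈ I' := hTImem _ (Submodule.orthogonalProjection I w).2
    apply Submodule.eq_starProjection_of_mem_orthogonal y.2
    have : (y : H) - T (Submodule.orthogonalProjection I w : H) - (y : H)
        = -(T (Submodule.orthogonalProjection I w : H)) := by abel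
    rw [this]
    exact A'ᗮ.neg_mem (hI'A' _ hTi)
  refine ⟨ContinuousLinearEquiv.ofBijective f hker hrange, ?_⟩
  intro x
  have : (ContinuousLinearEquiv.ofBijective f hker hrange) x = f x := rfl
  rw [this, hfapply]
  exact Submodule.sub_starProjection_mem_orthogonal _
end

section
/- Let $H_0, H_1, H_2$ be complex Hilbert spaces, let $d_1 : H_0 \to H_1$ and $d_2 : H_1 \to H_2$ be bounded linear operators with $d_2 \circ d_1 = 0$, and let $T_0 : H_0 \to H_0$, $T_1 : H_1 \to H_1$, $T_2 : H_2 \to H_2$ be continuous linear equivalences. Set $d_1' = T_1 \circ d_1 \circ T_0^{-1}$ and $d_2' = T_2 \circ d_2 \circ T_1^{-1}$, and define the Laplacians $\Delta = d_1 d_1^* + d_2^* d_2$ and $\Delta' = d_1' (d_1')^* + (d_2')^* d_2'$ on $H_1$. Then the map $U : \ker \Delta \to \ker \Delta'$ sending $x$ to the orthogonal projection onto $\ker \Delta'$ of $T_1 x$ is a continuous linear equivalence; in particular $\ker \Delta$ and $\ker \Delta'$ are isomorphic as Hilbert spaces. -/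
open ContinuousLinearMap

open scoped InnerProductSpace

section Aux

variable {H0 H1 H2 : Type*}
    [NormedAddCommGroup H0] [InnerProductSpace ℂ H0] [CompleteSpace H0]
    [NormedAddCommGroup H1] [InnerProductSpace ℂ H1] [CompleteSpace H1]
    [NormedAddCommGroup H2] [InnerProductSpace ℂ H2] [CompleteSpace H2]

/-- The kernel of the Laplacian is the intersection of `ker d1*` and `ker d2`. -/
lemma auxLapKer (d1 : H0 →L[ℂ] H1) (d2 : H1 →L[ℂ] H2) :
    LinearMap.ker ((d1.comp (adjoint d1) + (adjoint d2).comp d2 : H1 →L[ℂ] H1) : H1 →ₗ[ℂ] H1) =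
      LinearMap.ker ((adjoint d1 : H1 →L[ℂ] H0) : H1 →ₗ[ℂ] H0) ⊓ LinearMap.ker (d2 : H1 →ₗ[ℂ] H2) := by
  ext x
  simp only [LinearMap.mem_ker, Submodule.mem_inf, ContinuousLinearMap.add_apply,
    ContinuousLinearMap.comp_apply, ContinuousLinearMap.coe_coe]
  constructor
  · intro h
    have e1 := adjoint_inner_right (adjoint d1) x ((adjoint d1) x)
    rw [adjoint_adjoint] at e1
    have e2 := adjoint_inner_right d2 x (d2 x)
    have hsum : ⟪(adjoint d1) x, (adjoint d1) x⟫_ℂ + ⟪d2 x, d2 x⟫_ℂ = 0 := by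
      rw [← e1, ← e2, ← inner_add_right, h, inner_zero_right]
    rw [inner_self_eq_norm_sq_to_K, inner_self_eq_norm_sq_to_K] at hsum
    have hr : (‖(adjoint d1) x‖ ^ 2 + ‖d2 x‖ ^ 2 : ℝ) = 0 := by
      have h' : ((‖(adjoint d1) x‖ ^ 2 + ‖d2 x‖ ^ 2 : ℝ) : ℂ) = 0 := by push_cast; exact hsum
      exact_mod_cast h'
    have h1 : ‖(adjoint d1) x‖ = 0 := by nlinarith [sq_nonneg ‖(adjoint d1) x‖, sq_nonneg ‖d2 x‖]
    have h2 : ‖d2 x‖ = 0 := by nlinarith [sq_nonneg ‖(adjoint d1) x‖, sq_nonneg ‖d2 x‖]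
    exact ⟨norm_eq_zero.mp h1, norm_eq_zero.mp h2⟩
  · rintro ⟨h1, h2⟩
    rw [h1, h2, map_zero, map_zero, add_zero]

/-- The kernel of the adjoint is the orthogonal complement of the range. -/
lemma auxKerAdj (d1 : H0 →L[ℂ] H1) :
    (LinearMap.ker ((adjoint d1 : H1 →L[ℂ] H0) : H1 →ₗ[ℂ] H0) : Submodule ℂ H1) = (LinearMap.range (d1 : H0 →ₗ[ℂ] H1))ᗮ := by
  ext v
  rw [LinearMap.mem_ker, Submodule.mem_orthogonal, ContinuousLinearMap.coe_coe]
  constructor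
  · rintro h u ⟨w, rfl⟩
    rw [ContinuousLinearMap.coe_coe, ← adjoint_inner_right, h, inner_zero_right]
  · intro h
    refine ext_inner_left ℂ fun w => ?_
    rw [adjoint_inner_right, inner_zero_right]
    exact h _ ⟨w, rfl⟩

/-- Hodge-type fact: if `z ∈ ker d2` and `z ⊥ (ker d1* ⊓ ker d2)`, then `z ⊥ ker d1*`. -/
lemma auxHodge (d1 : H0 →L[ℂ] H1) (d2 : H1 →L[ℂ] H2) (hdd : d2.comp d1 = 0)
    (z : H1) (hz2 : d2 z = 0)
    (hzK : z ∈ ((LinearMap.ker ((adjoint d1 : H1 →L[ℂ] H0) : H1 →ₗ[ℂ] H0) ⊓ LinearMap.ker (d2 : H1 →ₗ[ℂ] H2) : Submodule ℂ H1))ᗮ) :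
    z ∈ ((LinearMap.ker ((adjoint d1 : H1 →L[ℂ] H0) : H1 →ₗ[ℂ] H0) : Submodule ℂ H1))ᗮ := by
  set N : Submodule ℂ H1 := LinearMap.ker ((adjoint d1 : H1 →L[ℂ] H0) : H1 →ₗ[ℂ] H0) with hN
  haveI : CompleteSpace N := (ContinuousLinearMap.isClosed_ker (adjoint d1)).completeSpace_coe
  set R : Submodule ℂ H1 := Nᗮ with hR
  -- R = closure of range d1 ⊆ ker d2
  have hRker2 : R ≤ LinearMap.ker (d2 : H1 →ₗ[ℂ] H2) := by
    rw [hR, hN, auxKerAdj, Submodule.orthogonal_orthogonal_eq_closure]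
    apply Submodule.topologicalClosure_minimal
    · rintro u ⟨w, rfl⟩
      have := ContinuousLinearMap.ext_iff.mp hdd w
      simpa using this
    · exact ContinuousLinearMap.isClosed_ker d2
  set a : H1 := (Submodule.orthogonalProjectionOnto R z : H1) with ha
  set b : H1 := z - a with hb
  have hbRperp : b ∈ Rᗮ := Submodule.sub_starProjection_mem_orthogonal z
  have hbN : b ∈ N := by
    have : Rᗮ = N := by rw [hR, Submodule.orthogonal_orthogonal]
    rwa [this] at hbRperp
  have haR : a ∈ R := (Submodule.orthogonalProjectionOnto R z).2
  have hb2 : d2 b = 0 := by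
    rw [hb, map_sub, hz2, (show d2 a = 0 from hRker2 haR), sub_zero]
  have hbK : b ∈ (N ⊓ LinearMap.ker (d2 : H1 →ₗ[ℂ] H2) : Submodule ℂ H1) := ⟨hbN, hb2⟩
  have hbz : ⟪b, z⟫_ℂ = 0 := hzK b hbK
  have hba : ⟪a, b⟫_ℂ = 0 := hbRperp a haR
  have hbb : ⟪b, b⟫_ℂ = 0 := by
    have : ⟪b, b⟫_ℂ = ⟪b, z⟫_ℂ - ⟪b, a⟫_ℂ := by rw [← inner_sub_right]
    rw [this, hbz, inner_eq_zero_symm.mp hba, sub_zero]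
  have hb0 : b = 0 := inner_self_eq_zero.mp hbb
  have hza : z = a := by rw [← sub_eq_zero]; exact hb0
  rw [hza]
  exact haR

end Aux

set_option maxHeartbeats 1000000 in
/-- Hilbert-space content of Proposition 1: conjugating a bounded Hilbert complex
by invertible operators `Tᵢ` gives a deformed complex whose harmonic space
`ker Δ'` is isomorphic to `ker Δ` via the map sending `x` to the orthogonal
projection of `T₁ x` onto `ker Δ'` (characterized by `U x ∈ ker Δ'` and
`T₁ x - U x ⊥ ker Δ'`). -/
theorem harmonic_spaces_of_conjugated_complexes_isomorphic {H0 H1 H2 : Type*}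
    [NormedAddCommGroup H0] [InnerProductSpace ℂ H0] [CompleteSpace H0]
    [NormedAddCommGroup H1] [InnerProductSpace ℂ H1] [CompleteSpace H1]
    [NormedAddCommGroup H2] [InnerProductSpace ℂ H2] [CompleteSpace H2]
    (d1 : H0 →L[ℂ] H1) (d2 : H1 →L[ℂ] H2) (hdd : d2.comp d1 = 0)
    (T0 : H0 ≃L[ℂ] H0) (T1 : H1 ≃L[ℂ] H1) (T2 : H2 ≃L[ℂ] H2)
    (d1' : H0 →L[ℂ] H1) (d2' : H1 →L[ℂ] H2)
    (hd1' : d1' = (T1 : H1 →L[ℂ] H1).comp (d1.comp (T0.symm : H0 →L[ℂ] H0)))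
    (hd2' : d2' = (T2 : H2 →L[ℂ] H2).comp (d2.comp (T1.symm : H1 →L[ℂ] H1))) :
    ∃ U : LinearMap.ker ((d1.comp (adjoint d1) + (adjoint d2).comp d2 : H1 →L[ℂ] H1) : H1 →ₗ[ℂ] H1) ≃L[ℂ]
        LinearMap.ker ((d1'.comp (adjoint d1') + (adjoint d2').comp d2' : H1 →L[ℂ] H1) : H1 →ₗ[ℂ] H1),
      ∀ x : LinearMap.ker ((d1.comp (adjoint d1) + (adjoint d2).comp d2 : H1 →L[ℂ] H1) : H1 →ₗ[ℂ] H1),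
        T1 (x : H1) - (U x : H1) ∈
          (LinearMap.ker ((d1'.comp (adjoint d1') + (adjoint d2').comp d2' : H1 →L[ℂ] H1) : H1 →ₗ[ℂ] H1))ᗮ := by
  set K : Submodule ℂ H1 := LinearMap.ker ((d1.comp (adjoint d1) + (adjoint d2).comp d2 : H1 →L[ℂ] H1) : H1 →ₗ[ℂ] H1) with hKdef
  set K' : Submodule ℂ H1 :=
    LinearMap.ker ((d1'.comp (adjoint d1') + (adjoint d2').comp d2' : H1 →L[ℂ] H1) : H1 →ₗ[ℂ] H1) with hK'def
  haveI : CompleteSpace K :=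
    (ContinuousLinearMap.isClosed_ker (d1.comp (adjoint d1) + (adjoint d2).comp d2)).completeSpace_coe
  haveI : CompleteSpace K' :=
    (ContinuousLinearMap.isClosed_ker
      (d1'.comp (adjoint d1') + (adjoint d2').comp d2')).completeSpace_coe
  have hK : K = LinearMap.ker ((adjoint d1 : H1 →L[ℂ] H0) : H1 →ₗ[ℂ] H0) ⊓ LinearMap.ker (d2 : H1 →ₗ[ℂ] H2) := auxLapKer d1 d2
  have hK' : K' = LinearMap.ker ((adjoint d1' : H1 →L[ℂ] H0) : H1 →ₗ[ℂ] H0) ⊓ LinearMap.ker (d2' : H1 →ₗ[ℂ] H2) := auxLapKer d1' d2'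
  -- d2' ∘ d1' = 0
  have hdd' : d2'.comp d1' = 0 := by
    rw [hd1', hd2']
    ext w
    have := ContinuousLinearMap.ext_iff.mp hdd (T0.symm w)
    simpa using this
  -- adjoint formulas
  have hadj1' : ∀ v : H1, adjoint d1' v =
      (adjoint (T0.symm : H0 →L[ℂ] H0)) ((adjoint d1) ((adjoint (T1 : H1 →L[ℂ] H1)) v)) := by
    intro v
    rw [hd1', adjoint_comp, adjoint_comp]
    rfl
  -- adjoint T1 ∘ adjoint T1.symm = id
  have hT1adj : ∀ v : H1,
      (adjoint (T1 : H1 →L[ℂ] H1)) ((adjoint (T1.symm : H1 →L[ℂ] H1)) v) = v := by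
    intro v
    have h1 : (T1.symm : H1 →L[ℂ] H1).comp (T1 : H1 →L[ℂ] H1) = ContinuousLinearMap.id ℂ H1 := by
      ext u; simp
    have := congrArg adjoint h1
    rw [adjoint_comp, adjoint_id] at this
    exact ContinuousLinearMap.ext_iff.mp this v
  -- adjoint T0 ∘ adjoint T0.symm = id
  have hT0adj : ∀ v : H0,
      (adjoint (T0 : H0 →L[ℂ] H0)) ((adjoint (T0.symm : H0 →L[ℂ] H0)) v) = v := by
    intro v
    have h1 : (T0.symm : H0 →L[ℂ] H0).comp (T0 : H0 →L[ℂ] H0) = ContinuousLinearMap.id ℂ H0 := by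
      ext u; simp
    have := congrArg adjoint h1
    rw [adjoint_comp, adjoint_id] at this
    exact ContinuousLinearMap.ext_iff.mp this v
  -- membership unfolds
  have hmemK : ∀ v : H1, v ∈ K ↔ (adjoint d1) v = 0 ∧ d2 v = 0 := by
    intro v
    rw [hK, Submodule.mem_inf, LinearMap.mem_ker, LinearMap.mem_ker, ContinuousLinearMap.coe_coe,
      ContinuousLinearMap.coe_coe]
  have hmemK' : ∀ v : H1, v ∈ K' ↔ (adjoint d1') v = 0 ∧ d2' v = 0 := by
    intro v
    rw [hK', Submodule.mem_inf, LinearMap.mem_ker, LinearMap.mem_ker, ContinuousLinearMap.coe_coe,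
      ContinuousLinearMap.coe_coe]
  -- the forward and backward maps
  set Uf : K →L[ℂ] K' :=
    (Submodule.orthogonalProjectionOnto K').comp ((T1 : H1 →L[ℂ] H1).comp K.subtypeL) with hUf
  set Vf : K' →L[ℂ] K :=
    (Submodule.orthogonalProjectionOnto K).comp ((T1.symm : H1 →L[ℂ] H1).comp K'.subtypeL) with hVf
  -- left inverse
  have hleft : Function.LeftInverse Vf Uf := by
    intro x
    obtain ⟨hx1, hx2⟩ := (hmemK x).mp x.2
    set u : H1 := (Submodule.orthogonalProjectionOnto K' (T1 (x : H1)) : H1) with hu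
    set w : H1 := T1 (x : H1) - u with hw
    have hworth : w ∈ K'ᗮ := Submodule.sub_starProjection_mem_orthogonal _
    have hw2 : d2' w = 0 := by
      have h1 : d2' (T1 (x : H1)) = 0 := by
        rw [hd2']; simp [hx2]
      have h2 : d2' u = 0 := ((hmemK' u).mp (Submodule.orthogonalProjectionOnto K' (T1 (x : H1))).2).2
      rw [hw, map_sub, h1, h2, sub_zero]
    have hwR : w ∈ ((LinearMap.ker ((adjoint d1' : H1 →L[ℂ] H0) : H1 →ₗ[ℂ] H0) : Submodule ℂ H1))ᗮ := by
      apply auxHodge d1' d2' hdd' w hw2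
      rwa [← hK']
    have hT1w : (T1.symm : H1 →L[ℂ] H1) w ∈ Kᗮ := by
      intro k hk
      have e : ⟪k, (T1.symm : H1 →L[ℂ] H1) w⟫_ℂ =
          ⟪(adjoint (T1.symm : H1 →L[ℂ] H1)) k, w⟫_ℂ := by
        rw [← adjoint_inner_right, adjoint_adjoint]
      have hm : (adjoint (T1.symm : H1 →L[ℂ] H1)) k ∈ LinearMap.ker ((adjoint d1' : H1 →L[ℂ] H0) : H1 →ₗ[ℂ] H0) := by
        rw [LinearMap.mem_ker, ContinuousLinearMap.coe_coe, hadj1', hT1adj, ((hmemK k).mp hk).1, map_zero]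
      rw [e]
      exact hwR _ hm
    have hcoe : ((Vf (Uf x) : K) : H1) = (x : H1) := by
      have hTu : (T1.symm : H1 →L[ℂ] H1) u = (x : H1) - (T1.symm : H1 →L[ℂ] H1) w := by
        rw [hw, map_sub]
        simp
      have happ : Vf (Uf x) = Submodule.orthogonalProjectionOnto K ((T1.symm : H1 →L[ℂ] H1) u) := by
        rw [hUf, hVf]; simp [hu]
      rw [happ, hTu, map_sub,
        Submodule.orthogonalProjectionOnto_apply_of_mem_orthogonal hT1w,
        Submodule.orthogonalProjectionOnto_mem_subspace_eq_self x]
      simp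
    exact Subtype.ext hcoe
  -- right inverse
  have hright : Function.RightInverse Vf Uf := by
    intro y
    obtain ⟨hy1, hy2⟩ := (hmemK' y).mp y.2
    set u : H1 := (Submodule.orthogonalProjectionOnto K ((T1.symm : H1 →L[ℂ] H1) (y : H1)) : H1) with hu
    set w : H1 := (T1.symm : H1 →L[ℂ] H1) (y : H1) - u with hw
    have hworth : w ∈ Kᗮ := Submodule.sub_starProjection_mem_orthogonal _
    have hw2 : d2 w = 0 := by
      have h1 : d2 ((T1.symm : H1 →L[ℂ] H1) (y : H1)) = 0 := by
        have : d2' (y : H1) = 0 := hy2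
        rw [hd2'] at this
        simp only [ContinuousLinearMap.comp_apply] at this
        have := congrArg (T2.symm) this
        simpa using this
      have h2 : d2 u = 0 :=
        ((hmemK u).mp (Submodule.orthogonalProjectionOnto K ((T1.symm : H1 →L[ℂ] H1) (y : H1))).2).2
      rw [hw, map_sub, h1, h2, sub_zero]
    have hwR : w ∈ ((LinearMap.ker ((adjoint d1 : H1 →L[ℂ] H0) : H1 →ₗ[ℂ] H0) : Submodule ℂ H1))ᗮ := by
      apply auxHodge d1 d2 hdd w hw2
      rwa [← hK]
    have hT1w : (T1 : H1 →L[ℂ] H1) w ∈ K'ᗮ := by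
      intro k hk
      have e : ⟪k, (T1 : H1 →L[ℂ] H1) w⟫_ℂ =
          ⟪(adjoint (T1 : H1 →L[ℂ] H1)) k, w⟫_ℂ := by
        rw [← adjoint_inner_right, adjoint_adjoint]
      have hm : (adjoint (T1 : H1 →L[ℂ] H1)) k ∈ LinearMap.ker ((adjoint d1 : H1 →L[ℂ] H0) : H1 →ₗ[ℂ] H0) := by
        have h0 : (adjoint d1') k = 0 := ((hmemK' k).mp hk).1
        rw [hadj1'] at h0
        have := congrArg (adjoint (T0 : H0 →L[ℂ] H0)) h0
        rw [hT0adj, map_zero] at this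
        exact this
      rw [e]
      exact hwR _ hm
    have hcoe : ((Uf (Vf y) : K') : H1) = (y : H1) := by
      have hTu : (T1 : H1 →L[ℂ] H1) u = (y : H1) - (T1 : H1 →L[ℂ] H1) w := by
        rw [hw, map_sub]
        simp
      have happ : Uf (Vf y) = Submodule.orthogonalProjectionOnto K' ((T1 : H1 →L[ℂ] H1) u) := by
        rw [hUf, hVf]; simp [hu]
      rw [happ, hTu, map_sub,
        Submodule.orthogonalProjectionOnto_apply_of_mem_orthogonal hT1w,
        Submodule.orthogonalProjectionOnto_mem_subspace_eq_self y]
      simp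
    exact Subtype.ext hcoe
  refine ⟨ContinuousLinearEquiv.equivOfInverse Uf Vf hleft hright, fun x => ?_⟩
  have heq : ((ContinuousLinearEquiv.equivOfInverse Uf Vf hleft hright x : K') : H1) =
      (Submodule.orthogonalProjectionOnto K' (T1 (x : H1)) : H1) := by
    rw [ContinuousLinearEquiv.equivOfInverse_apply, hUf]
    simp
  rw [heq]
  exact Submodule.sub_starProjection_mem_orthogonal _
end
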